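/- For any two facets I, J of a subword complex SC(Q,ρ) and any multisets A, B of positions, there exists a path of increasing flips from I to J with weakly decreasing positive labels that flips out exactly the multiset A and flips in exactly the multiset B, if and only if there exists a path of increasing flips from I to J with weakly decreasing negative labels flipping out A and flipping in B. In particular, the number of positive-falling paths from I to J equals the number of negative-falling paths from I to J. -/

import Mathlib

open scoped Classical

/-- Directed walks in a graph `E`, recorded by the list of vertices after the start. -/
inductive DWalk {α : Type*} (E : α → α → Prop) : α → α → List α → Prop
  | nil (u : α) : DWalk E u u []
  | cons {u w v : α} {l : List α} : E u w → DWalk E w v l → DWalk E u v (w :: l)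

/-- The sequence of edge labels along a walk from `u` with vertex list `l`. -/
def wLabels {α : Type*} (lab : α → α → ℕ) (u : α) (l : List α) : List ℕ :=
  List.zipWith lab (u :: l) l

/-- A facet of the subword complex `SC(Q, ρ)`: a set of positions whose complement is
a reduced expression for `ρ` as a subword of `Q`. -/
def IsSCFacet {B W : Type*} [Group W] {M : CoxeterMatrix B} (cs : CoxeterSystem M W)
    {m : ℕ} (Q : Fin m → B) (ρ : W) (I : Finset (Fin m)) : Prop :=
  cs.wordProd ((Iᶜ.sort (· ≤ ·)).map Q) = ρ ∧ Iᶜ.card = cs.length ρ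

/-- The edges of the increasing flip graph: `I → J` whenever `I∖{i} = J∖{j}` with
`i < j`. -/
def FlipEdge {B W : Type*} [Group W] {M : CoxeterMatrix B} (cs : CoxeterSystem M W)
    {m : ℕ} (Q : Fin m → B) (ρ : W) (I J : Finset (Fin m)) : Prop :=
  IsSCFacet cs Q ρ I ∧ IsSCFacet cs Q ρ J ∧
    ∃ i ∈ I, ∃ j ∈ J, i < j ∧ I.erase i = J.erase j

/-- The positive edge label of a flip `I → J`: the position flipped out,
i.e. the unique element of `I ∖ J`. -/
def pLab {m : ℕ} (I J : Finset (Fin m)) : ℕ := (I \ J).sup Fin.val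

/-- The negative edge label of a flip `I → J`: the position flipped in,
i.e. the unique element of `J ∖ I`. -/
def nLab {m : ℕ} (I J : Finset (Fin m)) : ℕ := (J \ I).sup Fin.val

/-! ### Auxiliary development -/

namespace FallingAux

variable {m : ℕ}

/-- sorted list of a finset, split at a point. -/
theorem sort_split (C : Finset (Fin m)) (i : Fin m) :
    C.sort (· ≤ ·) =
      (C.filter (· < i)).sort (· ≤ ·) ++ (C.filter (i ≤ ·)).sort (· ≤ ·) := by
  symm
  apply (fun hp hs1 hs2 => List.Perm.eq_of_pairwise' hs1 hs2 hp) ?_ ?_ (C.pairwise_sort _)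
  · rw [← Multiset.coe_eq_coe, ← Multiset.coe_add, Finset.sort_eq, Finset.sort_eq,
      Finset.sort_eq, Finset.filter_val, Finset.filter_val]
    conv_rhs => rw [← Multiset.filter_add_not (fun x => x < i) C.val]
    congr 1
    apply Multiset.filter_congr
    intro x _
    simp [not_lt]
  · rw [List.pairwise_append]
    refine ⟨Finset.pairwise_sort _ _, Finset.pairwise_sort _ _, ?_⟩
    intro a ha b hb
    rw [Finset.mem_sort] at ha hb
    have h1 := (Finset.mem_filter.1 ha).2
    have h2 := (Finset.mem_filter.1 hb).2
    exact le_of_lt (lt_of_lt_of_le h1 h2)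

theorem sort_min_cons {D : Finset (Fin m)} {i : Fin m} (hi : i ∈ D)
    (hmin : ∀ x ∈ D, i ≤ x) :
    D.sort (· ≤ ·) = i :: (D.erase i).sort (· ≤ ·) := by
  symm
  apply (fun hp hs1 hs2 => List.Perm.eq_of_pairwise' hs1 hs2 hp) ?_ ?_ (D.pairwise_sort _)
  · rw [← Multiset.coe_eq_coe]
    show (i ::ₘ ((D.erase i).sort (· ≤ ·) : List (Fin m)) : Multiset (Fin m)) = _
    rw [Finset.sort_eq, Finset.sort_eq, Finset.erase_val]
    exact Multiset.cons_erase hi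
  · rw [List.pairwise_cons]
    refine ⟨?_, Finset.pairwise_sort _ _⟩
    intro b hb
    rw [Finset.mem_sort] at hb
    exact hmin b (Finset.mem_of_mem_erase hb)

section Core

variable {B W : Type*} [Group W] {M : CoxeterMatrix B} (cs : CoxeterSystem M W)
variable {m : ℕ} (Q : Fin m → B)

/-- The word of a set of positions. -/
def fword (C : Finset (Fin m)) : List B := (C.sort (· ≤ ·)).map Q

/-- The reflection associated to a position `p`, relative to the set of positions `C`. -/
def tC (C : Finset (Fin m)) (p : Fin m) : W :=
  cs.wordProd (fword Q (C.filter (· < p))) * cs.simple (Q p) *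
    (cs.wordProd (fword Q (C.filter (· < p))))⁻¹

theorem tc_congr {C C' : Finset (Fin m)} {p : Fin m}
    (h : C.filter (· < p) = C'.filter (· < p)) : tC cs Q C p = tC cs Q C' p := by
  unfold tC; rw [h]

theorem fword_split_mem {C : Finset (Fin m)} {i : Fin m} (hi : i ∈ C) :
    fword Q C = fword Q (C.filter (· < i)) ++ Q i :: fword Q (C.filter (i < ·)) := by
  unfold fword
  rw [sort_split C i, sort_min_cons (D := C.filter (i ≤ ·)) (i := i)
    (by simp [Finset.mem_filter, hi, le_refl])
    (fun x hx => (Finset.mem_filter.1 hx).2)]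
  have : (C.filter (i ≤ ·)).erase i = C.filter (i < ·) := by
    ext x
    simp only [Finset.mem_erase, Finset.mem_filter]
    constructor
    · rintro ⟨hne, hx, hle⟩; exact ⟨hx, lt_of_le_of_ne hle (Ne.symm hne)⟩
    · rintro ⟨hx, hlt⟩; exact ⟨(ne_of_lt hlt).symm, hx, le_of_lt hlt⟩
  rw [this, List.map_append]
  rfl

theorem fword_split_not_mem {C : Finset (Fin m)} {i : Fin m} (hi : i ∉ C) :
    fword Q C = fword Q (C.filter (· < i)) ++ fword Q (C.filter (i < ·)) := by
  unfold fword
  rw [sort_split C i]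
  have : C.filter (i ≤ ·) = C.filter (i < ·) := by
    ext x
    simp only [Finset.mem_filter]
    constructor
    · rintro ⟨hx, hle⟩
      exact ⟨hx, lt_of_le_of_ne hle (by rintro rfl; exact hi hx)⟩
    · rintro ⟨hx, hlt⟩; exact ⟨hx, le_of_lt hlt⟩
  rw [this, List.map_append]

theorem filter_insert_lt {C : Finset (Fin m)} {i p : Fin m} (hip : i < p) :
    (insert i C).filter (· < p) = insert i (C.filter (· < p)) := by
  ext x; simp only [Finset.mem_filter, Finset.mem_insert]
  constructor
  · rintro ⟨(rfl | hx), hlt⟩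
    · exact Or.inl rfl
    · exact Or.inr ⟨hx, hlt⟩
  · rintro (rfl | ⟨hx, hlt⟩)
    · exact ⟨Or.inl rfl, hip⟩
    · exact ⟨Or.inr hx, hlt⟩

theorem filter_insert_ge {C : Finset (Fin m)} {i p : Fin m} (hip : ¬ i < p) :
    (insert i C).filter (· < p) = C.filter (· < p) := by
  ext x; simp only [Finset.mem_filter, Finset.mem_insert]
  constructor
  · rintro ⟨(rfl | hx), hlt⟩
    · exact absurd hlt hip
    · exact ⟨hx, hlt⟩
  · rintro ⟨hx, hlt⟩; exact ⟨Or.inr hx, hlt⟩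

theorem filter_filter_lt {C : Finset (Fin m)} {i p : Fin m} (hip : i < p) :
    (C.filter (· < p)).filter (· < i) = C.filter (· < i) := by
  ext x; simp only [Finset.mem_filter, and_assoc]
  constructor
  · rintro ⟨hx, _, h2⟩; exact ⟨hx, h2⟩
  · rintro ⟨hx, h2⟩; exact ⟨hx, lt_trans h2 hip, h2⟩

/-- Inserting a position multiplies the word product by the corresponding reflection. -/
theorem prod_insert {C : Finset (Fin m)} {i : Fin m} (hi : i ∉ C) :
    cs.wordProd (fword Q (insert i C)) = tC cs Q C i * cs.wordProd (fword Q C) := by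
  rw [fword_split_mem Q (C := insert i C) (i := i) (Finset.mem_insert_self i C),
    fword_split_not_mem Q hi]
  have h1 : (insert i C).filter (· < i) = C.filter (· < i) :=
    filter_insert_ge (lt_irrefl i)
  have h2 : (insert i C).filter (i < ·) = C.filter (i < ·) := by
    ext x; simp only [Finset.mem_filter, Finset.mem_insert]
    constructor
    · rintro ⟨(rfl | hx), hlt⟩
      · exact absurd hlt (lt_irrefl _)
      · exact ⟨hx, hlt⟩
    · rintro ⟨hx, hlt⟩; exact ⟨Or.inr hx, hlt⟩
  rw [h1, h2, cs.wordProd_append, cs.wordProd_append, cs.wordProd_cons]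
  unfold tC
  group

/-- Conjugation rule for `tC` under insertion. -/
theorem tc_insert {C : Finset (Fin m)} {i p : Fin m} (hi : i ∉ C) (hne : p ≠ i) :
    tC cs Q (insert i C) p =
      if i < p then tC cs Q C i * tC cs Q C p * (tC cs Q C i)⁻¹ else tC cs Q C p := by
  by_cases hip : i < p
  · rw [if_pos hip]
    have hfi : i ∉ C.filter (· < p) := fun h => hi (Finset.mem_filter.1 h).1
    have key : cs.wordProd (fword Q ((insert i C).filter (· < p)))
        = tC cs Q C i * cs.wordProd (fword Q (C.filter (· < p))) := by
      rw [filter_insert_lt hip, prod_insert cs Q hfi]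
      congr 1
      exact tc_congr cs Q (filter_filter_lt hip)
    show cs.wordProd (fword Q ((insert i C).filter (· < p))) * cs.simple (Q p) *
        (cs.wordProd (fword Q ((insert i C).filter (· < p))))⁻¹ = _
    rw [key]
    simp only [tC]
    group
  · rw [if_neg hip]
    exact tc_congr cs Q (filter_insert_ge hip)

theorem tc_erase_lt {C : Finset (Fin m)} {j p : Fin m} (hpj : p ≤ j) :
    tC cs Q (C.erase j) p = tC cs Q C p := by
  apply tc_congr
  ext x; simp only [Finset.mem_filter, Finset.mem_erase]
  constructor
  · rintro ⟨⟨_, hx⟩, h2⟩; exact ⟨hx, h2⟩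
  · rintro ⟨hx, h2⟩
    exact ⟨⟨by rintro rfl; exact absurd (lt_of_lt_of_le h2 hpj) (lt_irrefl x), hx⟩, h2⟩

/-- The flip update rule: after flipping `j ↦ a` (`a < j`), `tC` is conjugated by the
flip reflection on the interval `(a, j]` and unchanged elsewhere. -/
theorem tc_flip {C : Finset (Fin m)} {a j : Fin m} (hj : j ∈ C) (ha : a ∉ C)
    (haj : a < j) (hcond : tC cs Q C a = tC cs Q C j) (p : Fin m) :
    tC cs Q (insert a (C.erase j)) p =
      if a < p ∧ p ≤ j then tC cs Q C a * tC cs Q C p * (tC cs Q C a)⁻¹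
      else tC cs Q C p := by
  set R := C.erase j with hR
  have haR : a ∉ R := fun h => ha (Finset.mem_of_mem_erase h)
  have hRa : tC cs Q R a = tC cs Q C a := tc_erase_lt cs Q (le_of_lt haj)
  have hRj : tC cs Q R j = tC cs Q C j := tc_erase_lt cs Q (le_refl j)
  have hCins : C = insert j R := by rw [hR, Finset.insert_erase hj]
  have hjR : j ∉ R := Finset.notMem_erase j C
  by_cases hpa : p = a
  · subst hpa
    rw [if_neg (by simp [lt_irrefl])]
    apply tc_congr
    ext x; simp only [hR, Finset.mem_filter, Finset.mem_insert, Finset.mem_erase]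
    constructor
    · rintro ⟨(rfl | ⟨_, hx⟩), h2⟩
      · exact absurd h2 (lt_irrefl x)
      · exact ⟨hx, h2⟩
    · rintro ⟨hx, h2⟩
      refine ⟨Or.inr ⟨?_, hx⟩, h2⟩
      rintro rfl; exact absurd (lt_trans h2 haj) (lt_irrefl x)
  · have hstep : tC cs Q (insert a R) p =
        if a < p then tC cs Q C a * tC cs Q R p * (tC cs Q C a)⁻¹ else tC cs Q R p := by
      rw [← hRa]; exact tc_insert cs Q haR hpa
    by_cases hpj : p = j
    · subst hpj
      rw [hstep, if_pos haj, hRj, ← hcond, if_pos ⟨haj, le_refl p⟩]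
    · have hCp : tC cs Q C p =
          if j < p then tC cs Q R j * tC cs Q R p * (tC cs Q R j)⁻¹ else tC cs Q R p := by
        conv_lhs => rw [hCins]
        exact tc_insert cs Q hjR hpj
      rw [hstep]
      by_cases h1 : a < p
      · rw [if_pos h1]
        by_cases h2 : j < p
        · rw [if_neg (by rintro ⟨_, hle⟩; exact absurd (lt_of_lt_of_le h2 hle) (lt_irrefl j)),
            hCp, if_pos h2, hRj, hcond]
        · have : p ≤ j := le_of_not_gt h2
          rw [if_pos ⟨h1, this⟩, hCp, if_neg h2]
      · rw [if_neg h1, if_neg (by rintro ⟨hlt, _⟩; exact h1 hlt), hCp,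
          if_neg (by intro hjp; exact h1 (lt_trans haj hjp))]

variable (ρ : W)

/-- Injectivity of `tC` on a facet complement (left inversion sequences of reduced
words have no duplicates). -/
theorem tc_inj {C : Finset (Fin m)} (hprod : cs.wordProd (fword Q C) = ρ)
    (hcard : C.card = cs.length ρ) {c c' : Fin m} (hc : c ∈ C) (hc' : c' ∈ C)
    (heq : tC cs Q C c = tC cs Q C c') : c = c' := by
  have hred : cs.IsReduced (fword Q C) := by
    unfold CoxeterSystem.IsReduced
    rw [hprod]
    unfold fword
    rw [List.length_map, Finset.length_sort, hcard]
  have hnd : (cs.leftInvSeq (fword Q C)).Nodup := hred.nodup_leftInvSeq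
  -- the index of a position in the sorted complement
  set k := fun c : Fin m => (C.filter (· < c)).card with hk
  have hbridge : ∀ d ∈ C, (cs.leftInvSeq (fword Q C)).getD (k d) 1 = tC cs Q C d := by
    intro d hd
    rw [cs.getD_leftInvSeq]
    have hsplit : fword Q C = fword Q (C.filter (· < d)) ++ Q d :: fword Q (C.filter (d < ·)) :=
      fword_split_mem Q hd
    have hlen : (fword Q (C.filter (· < d))).length = k d := by
      unfold fword; rw [List.length_map, Finset.length_sort]
    have htake : (fword Q C).take (k d) = fword Q (C.filter (· < d)) := by
      rw [hsplit, ← hlen, List.take_left]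
    have hget : (fword Q C)[k d]? = some (Q d) := by
      rw [hsplit, ← hlen]
      rw [List.getElem?_append_right (le_refl _)]
      simp
    rw [htake, hget]
    rfl
  have hkc : ∀ d ∈ C, k d < C.card := by
    intro d hd
    apply Finset.card_lt_card
    constructor
    · exact Finset.filter_subset _ _
    · intro hsub
      have := hsub hd
      simp at this
  have hklt : ∀ d d' : Fin m, d ∈ C → d < d' → k d < k d' := by
    intro d d' hd hdd
    apply Finset.card_lt_card
    constructor
    · intro x hx
      rw [Finset.mem_filter] at hx ⊢
      exact ⟨hx.1, lt_trans hx.2 hdd⟩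
    · intro hsub
      have := hsub (Finset.mem_filter.2 ⟨hd, hdd⟩)
      rw [Finset.mem_filter] at this
      exact absurd this.2 (lt_irrefl d)
  by_contra hne
  have hkk : k c ≠ k c' := by
    rcases lt_or_gt_of_ne hne with h | h
    · exact ne_of_lt (hklt c c' hc h)
    · exact (ne_of_lt (hklt c' c hc' h)).symm
  apply hkk
  have hlen : (cs.leftInvSeq (fword Q C)).length = C.card := by
    rw [cs.length_leftInvSeq]
    unfold fword; rw [List.length_map, Finset.length_sort]
  have h1 : k c < (cs.leftInvSeq (fword Q C)).length := by rw [hlen]; exact hkc c hc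
  have h2 : k c' < (cs.leftInvSeq (fword Q C)).length := by rw [hlen]; exact hkc c' hc'
  have := hbridge c hc
  rw [List.getD_eq_getElem _ _ h1] at this
  have that := hbridge c' hc'
  rw [List.getD_eq_getElem _ _ h2] at that
  have : (cs.leftInvSeq (fword Q C))[k c] = (cs.leftInvSeq (fword Q C))[k c'] := by
    rw [this, that, heq]
  exact (List.Nodup.getElem_inj_iff hnd).1 this

theorem compl_flip {X : Finset (Fin m)} {i j : Fin m} (hi : i ∈ X) (hj : j ∉ X)
    (hne : i ≠ j) : (insert j (X.erase i))ᶜ = insert i (Xᶜ.erase j) := by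
  ext x
  simp only [Finset.mem_compl, Finset.mem_insert, Finset.mem_erase]
  by_cases h1 : x = i <;> by_cases h2 : x = j <;> by_cases h3 : x ∈ X <;>
    subst_eqs <;> tauto

/-- Characterization of increasing flips via the reflection function. -/
theorem edge_iff {I : Finset (Fin m)} (hI : IsSCFacet cs Q ρ I) {i j : Fin m}
    (hi : i ∈ I) (hj : j ∉ I) (hij : i < j) :
    FlipEdge cs Q ρ I (insert j (I.erase i)) ↔ tC cs Q Iᶜ i = tC cs Q Iᶜ j := by
  have hne : i ≠ j := ne_of_lt hij
  have hcompl : (insert j (I.erase i))ᶜ = insert i (Iᶜ.erase j) := compl_flip hi hj hne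
  have hjC : j ∈ Iᶜ := Finset.mem_compl.2 hj
  have hiC : i ∉ Iᶜ := fun h => (Finset.mem_compl.1 h) hi
  have hiR : i ∉ Iᶜ.erase j := fun h => hiC (Finset.mem_of_mem_erase h)
  have hIC : Iᶜ = insert j (Iᶜ.erase j) := (Finset.insert_erase hjC).symm
  have hjR : j ∉ Iᶜ.erase j := Finset.notMem_erase j Iᶜ
  have e1 : cs.wordProd (fword Q Iᶜ) = tC cs Q (Iᶜ.erase j) j * cs.wordProd (fword Q (Iᶜ.erase j)) := by
    conv_lhs => rw [hIC]
    exact prod_insert cs Q hjR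
  have e2 : cs.wordProd (fword Q (insert i (Iᶜ.erase j)))
      = tC cs Q (Iᶜ.erase j) i * cs.wordProd (fword Q (Iᶜ.erase j)) := prod_insert cs Q hiR
  have hRi : tC cs Q (Iᶜ.erase j) i = tC cs Q Iᶜ i := tc_erase_lt cs Q (le_of_lt hij)
  have hRj : tC cs Q (Iᶜ.erase j) j = tC cs Q Iᶜ j := tc_erase_lt cs Q (le_refl j)
  have hIprod : cs.wordProd (fword Q Iᶜ) = ρ := hI.1
  constructor
  · rintro ⟨-, hJ, -⟩
    have hJprod : cs.wordProd (fword Q (insert j (I.erase i))ᶜ) = ρ := hJ.1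
    rw [hcompl] at hJprod
    rw [e2] at hJprod
    rw [← hRi, ← hRj]
    have : tC cs Q (Iᶜ.erase j) i * cs.wordProd (fword Q (Iᶜ.erase j))
        = tC cs Q (Iᶜ.erase j) j * cs.wordProd (fword Q (Iᶜ.erase j)) := by
      rw [hJprod, ← hIprod, e1]
    exact mul_right_cancel this
  · intro hcond
    have hJprod : cs.wordProd (fword Q (insert j (I.erase i))ᶜ) = ρ := by
      rw [hcompl, e2, hRi, hcond, ← hRj, ← e1, hIprod]
    have hJcard : (insert j (I.erase i))ᶜ.card = cs.length ρ := by
      rw [hcompl, Finset.card_insert_of_notMem hiR, Finset.card_erase_of_mem hjC]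
      rw [← hI.2]
      have : 0 < Iᶜ.card := Finset.card_pos.2 ⟨j, hjC⟩
      omega
    refine ⟨hI, ⟨hJprod, hJcard⟩, i, hi, j, ?_, hij, ?_⟩
    · simp [Finset.mem_insert]
    · have : j ∉ I.erase i := fun h => hj (Finset.mem_of_mem_erase h)
      rw [Finset.erase_insert this]

theorem sdiff_flip {I : Finset (Fin m)} {i j : Fin m} (hi : i ∈ I) (hj : j ∉ I)
    (hne : i ≠ j) :
    I \ insert j (I.erase i) = {i} ∧ insert j (I.erase i) \ I = {j} := by
  constructor <;>
  · ext x
    simp only [Finset.mem_sdiff, Finset.mem_insert, Finset.mem_erase, Finset.mem_singleton]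
    by_cases h1 : x = i <;> by_cases h2 : x = j <;> by_cases h3 : x ∈ I <;>
      subst_eqs <;> tauto

theorem lab_flip {I : Finset (Fin m)} {i j : Fin m} (hi : i ∈ I) (hj : j ∉ I)
    (hne : i ≠ j) :
    pLab I (insert j (I.erase i)) = i.val ∧ nLab I (insert j (I.erase i)) = j.val := by
  obtain ⟨h1, h2⟩ := sdiff_flip hi hj hne
  unfold pLab nLab
  rw [h1, h2, Finset.sup_singleton, Finset.sup_singleton]
  exact ⟨rfl, rfl⟩

/-- Full destructor for a flip edge. -/
theorem edge_dest {I J : Finset (Fin m)} (h : FlipEdge cs Q ρ I J) :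
    ∃ i j : Fin m, i ∈ I ∧ j ∉ I ∧ j ∈ J ∧ i ∉ J ∧ i < j ∧
      J = insert j (I.erase i) ∧ I = insert i (J.erase j) ∧
      Jᶜ = insert i (Iᶜ.erase j) ∧
      IsSCFacet cs Q ρ I ∧ IsSCFacet cs Q ρ J ∧
      tC cs Q Iᶜ i = tC cs Q Iᶜ j ∧ tC cs Q Jᶜ i = tC cs Q Jᶜ j ∧
      pLab I J = i.val ∧ nLab I J = j.val := by
  obtain ⟨hI, hJ, i, hi, j, hjJ, hij, herase⟩ := h
  have hne : i ≠ j := ne_of_lt hij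
  have hjI : j ∉ I := by
    intro hjI
    have : j ∈ I.erase i := Finset.mem_erase.2 ⟨hne.symm, hjI⟩
    rw [herase] at this
    exact absurd this (Finset.notMem_erase j J)
  have hiJ : i ∉ J := by
    intro hiJ
    have : i ∈ J.erase j := Finset.mem_erase.2 ⟨hne, hiJ⟩
    rw [← herase] at this
    exact absurd this (Finset.notMem_erase i I)
  have hJeq : J = insert j (I.erase i) := by
    rw [herase, Finset.insert_erase hjJ]
  have hIeq : I = insert i (J.erase j) := by
    rw [← herase, Finset.insert_erase hi]
  have hcompl : Jᶜ = insert i (Iᶜ.erase j) := by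
    rw [hJeq]; exact compl_flip hi hjI hne
  have hcond : tC cs Q Iᶜ i = tC cs Q Iᶜ j := by
    rw [← edge_iff cs Q ρ hI hi hjI hij, ← hJeq]
    exact ⟨hI, hJ, i, hi, j, hjJ, hij, herase⟩
  have hjC : j ∈ Iᶜ := Finset.mem_compl.2 hjI
  have hiR : i ∉ Iᶜ.erase j := fun hmem =>
    (Finset.mem_compl.1 (Finset.mem_of_mem_erase hmem)) hi
  have hRi : tC cs Q (Iᶜ.erase j) i = tC cs Q Iᶜ i := tc_erase_lt cs Q (le_of_lt hij)
  have hRj : tC cs Q (Iᶜ.erase j) j = tC cs Q Iᶜ j := tc_erase_lt cs Q (le_refl j)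
  have hcondD : tC cs Q Jᶜ i = tC cs Q Jᶜ j := by
    have hDi : tC cs Q Jᶜ i = tC cs Q (Iᶜ.erase j) i := by
      rw [hcompl]
      exact tc_congr cs Q (filter_insert_ge (lt_irrefl i))
    have hDj : tC cs Q Jᶜ j = tC cs Q (Iᶜ.erase j) i * tC cs Q (Iᶜ.erase j) j *
        (tC cs Q (Iᶜ.erase j) i)⁻¹ := by
      rw [hcompl]
      have := tc_insert cs Q (C := Iᶜ.erase j) (i := i) (p := j) hiR hne.symm
      rw [this, if_pos hij]
    rw [hDi, hDj, hRi, hRj, hcond]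
    group
  obtain ⟨hp, hn⟩ := lab_flip hi hjI hne
  exact ⟨i, j, hi, hjI, hjJ, hiJ, hij, hJeq, hIeq, hcompl, hI, hJ, hcond, hcondD,
    by rw [hJeq] at *; exact hp, by rw [hJeq] at *; exact hn⟩

/-- Uniqueness of the flip with a given out-label. -/
theorem out_unique {I J1 J2 : Finset (Fin m)} (h1 : FlipEdge cs Q ρ I J1)
    (h2 : FlipEdge cs Q ρ I J2) (hp : pLab I J1 = pLab I J2) :
    J1 = J2 ∧ nLab I J1 = nLab I J2 := by
  obtain ⟨i1, j1, hi1, hj1I, -, -, hij1, hJ1eq, -, -, hI, -, hc1, -, hp1, hn1⟩ :=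
    edge_dest cs Q ρ h1
  obtain ⟨i2, j2, hi2, hj2I, -, -, hij2, hJ2eq, -, -, -, -, hc2, -, hp2, hn2⟩ :=
    edge_dest cs Q ρ h2
  have hii : i1 = i2 := Fin.val_injective (by rw [← hp1, ← hp2, hp])
  subst hii
  have hjj : j1 = j2 := by
    apply tc_inj cs Q ρ hI.1 hI.2 (Finset.mem_compl.2 hj1I) (Finset.mem_compl.2 hj2I)
    rw [← hc1, ← hc2]
  subst hjj
  constructor
  · rw [hJ1eq, hJ2eq]
  · rw [hn1, hn2]

/-- Uniqueness of the flip with a given in-label. -/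
theorem in_unique {I1 I2 J : Finset (Fin m)} (h1 : FlipEdge cs Q ρ I1 J)
    (h2 : FlipEdge cs Q ρ I2 J) (hn : nLab I1 J = nLab I2 J) :
    I1 = I2 ∧ pLab I1 J = pLab I2 J := by
  obtain ⟨i1, j1, hi1, hj1I, hj1J, hi1J, hij1, -, hI1eq, -, -, hJ, -, hc1, hp1, hn1⟩ :=
    edge_dest cs Q ρ h1
  obtain ⟨i2, j2, hi2, hj2I, hj2J, hi2J, hij2, -, hI2eq, -, -, -, -, hc2, hp2, hn2⟩ :=
    edge_dest cs Q ρ h2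
  have hjj : j1 = j2 := Fin.val_injective (by rw [← hn1, ← hn2, hn])
  subst hjj
  have hii : i1 = i2 := by
    apply tc_inj cs Q ρ hJ.1 hJ.2 (Finset.mem_compl.2 hi1J) (Finset.mem_compl.2 hi2J)
    rw [hc1, hc2]
  subst hii
  constructor
  · rw [hI1eq, hI2eq]
  · rw [hp1, hp2]

set_option maxHeartbeats 1000000 in
/-- Square lemma, forward form: a flip with smaller out-label and larger in-label
followed by one with larger out-label and smaller in-label can be reordered. -/
theorem swap_fwd {I X X' : Finset (Fin m)} (h1 : FlipEdge cs Q ρ I X)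
    (h2 : FlipEdge cs Q ρ X X') (hp : pLab I X < pLab X X') (hn : nLab X X' < nLab I X) :
    ∃ X2, FlipEdge cs Q ρ I X2 ∧ FlipEdge cs Q ρ X2 X' ∧
      pLab I X2 = pLab X X' ∧ nLab I X2 = nLab X X' ∧
      pLab X2 X' = pLab I X ∧ nLab X2 X' = nLab I X := by
  obtain ⟨i, b, hiI, hbI, -, -, hib, hXeq, -, hXc, hI, hX, hc1, -, hp1, hn1⟩ :=
    edge_dest cs Q ρ h1
  obtain ⟨a, j, haX, hjX, -, -, haj, hX'eq, -, -, -, -, hc2, -, hp2, hn2⟩ :=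
    edge_dest cs Q ρ h2
  rw [hp1, hp2] at hp
  rw [hn1, hn2] at hn
  have hia : i < a := hp
  have hjb : j < b := hn
  have haI : a ∈ I := by
    have : a ≠ b := ne_of_lt (lt_trans haj hjb)
    rw [hXeq] at haX
    rcases Finset.mem_insert.1 haX with h | h
    · exact absurd h this
    · exact Finset.mem_of_mem_erase h
  have hjI : j ∉ I := by
    intro hjI
    apply hjX
    rw [hXeq]
    exact Finset.mem_insert.2 (Or.inr (Finset.mem_erase.2 ⟨ne_of_gt (lt_trans hia haj), hjI⟩))
  -- transfer the condition for the second flip to the complement of I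
  have hflip1 := tc_flip cs Q (C := Iᶜ) (a := i) (j := b) (Finset.mem_compl.2 hbI)
    (fun h => (Finset.mem_compl.1 h) hiI) hib hc1
  have hXca : tC cs Q Xᶜ a = tC cs Q Iᶜ i * tC cs Q Iᶜ a * (tC cs Q Iᶜ i)⁻¹ := by
    rw [hXc, hflip1 a, if_pos ⟨hia, le_of_lt (lt_trans haj hjb)⟩]
  have hXcj : tC cs Q Xᶜ j = tC cs Q Iᶜ i * tC cs Q Iᶜ j * (tC cs Q Iᶜ i)⁻¹ := by
    rw [hXc, hflip1 j, if_pos ⟨lt_trans hia haj, le_of_lt hjb⟩]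
  have hc2I : tC cs Q Iᶜ a = tC cs Q Iᶜ j := by
    have := hc2
    rw [hXca, hXcj] at this
    exact mul_left_cancel (mul_right_cancel this)
  set X2 := insert j (I.erase a) with hX2
  have e3 : FlipEdge cs Q ρ I X2 := (edge_iff cs Q ρ hI haI hjI haj).2 hc2I
  have hX2c : X2ᶜ = insert a (Iᶜ.erase j) := compl_flip haI hjI (ne_of_lt haj)
  have hX2facet : IsSCFacet cs Q ρ X2 := e3.2.1
  have hiX2 : i ∈ X2 := Finset.mem_insert.2 (Or.inr (Finset.mem_erase.2 ⟨ne_of_lt hia, hiI⟩))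
  have hbX2 : b ∉ X2 := by
    intro hmem
    rcases Finset.mem_insert.1 hmem with h | h
    · exact absurd h (ne_of_gt hjb)
    · exact hbI (Finset.mem_of_mem_erase h)
  have hflip2 := tc_flip cs Q (C := Iᶜ) (a := a) (j := j) (Finset.mem_compl.2 hjI)
    (fun h => (Finset.mem_compl.1 h) haI) haj hc2I
  have hcond4 : tC cs Q X2ᶜ i = tC cs Q X2ᶜ b := by
    rw [hX2c, hflip2 i, hflip2 b, if_neg (by rintro ⟨h, -⟩; exact absurd h (not_lt.2 (le_of_lt hia))),
      if_neg (by rintro ⟨-, h⟩; exact absurd h (not_le.2 hjb)), hc1]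
  have e4 : FlipEdge cs Q ρ X2 (insert b (X2.erase i)) :=
    (edge_iff cs Q ρ hX2facet hiX2 hbX2 hib).2 hcond4
  have hsq : insert b (X2.erase i) = X' := by
    rw [hX'eq, hXeq, hX2]
    have n1 : i ≠ a := ne_of_lt hia
    have n2 : i ≠ j := ne_of_lt (lt_trans hia haj)
    have n3 : i ≠ b := ne_of_lt hib
    have n4 : a ≠ j := ne_of_lt haj
    have n5 : a ≠ b := ne_of_lt (lt_trans haj hjb)
    have n6 : j ≠ b := ne_of_lt hjb
    ext x
    simp only [Finset.mem_insert, Finset.mem_erase]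
    by_cases e1 : x = i <;> by_cases e2 : x = a <;> by_cases e3 : x = j <;>
      by_cases e4 : x = b <;> subst_eqs <;> tauto
  rw [hsq] at e4
  obtain ⟨hp3, hn3⟩ := lab_flip haI hjI (ne_of_lt haj)
  obtain ⟨hp4, hn4⟩ := lab_flip hiX2 hbX2 (ne_of_lt hib)
  rw [hsq] at hp4 hn4
  exact ⟨X2, e3, e4, by rw [← hX2] at hp3; rw [hp3, hp2], by rw [← hX2] at hn3; rw [hn3, hn2],
    by rw [hp4, hp1], by rw [hn4, hn1]⟩

set_option maxHeartbeats 1000000 in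
/-- Square lemma, backward form. -/
theorem swap_bwd {I X0 X' : Finset (Fin m)} (h1 : FlipEdge cs Q ρ I X0)
    (h2 : FlipEdge cs Q ρ X0 X') (hp : pLab X0 X' < pLab I X0)
    (hn : nLab I X0 < nLab X0 X') :
    ∃ X, FlipEdge cs Q ρ I X ∧ FlipEdge cs Q ρ X X' ∧
      pLab I X = pLab X0 X' ∧ nLab I X = nLab X0 X' ∧
      pLab X X' = pLab I X0 ∧ nLab X X' = nLab I X0 := by
  obtain ⟨a, j, haI, hjI, -, -, haj, hX0eq, -, hX0c, hI, hX0, hc1, -, hp1, hn1⟩ :=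
    edge_dest cs Q ρ h1
  obtain ⟨i, b, hiX0, hbX0, -, -, hib, hX'eq, -, -, -, -, hc2, -, hp2, hn2⟩ :=
    edge_dest cs Q ρ h2
  rw [hp1, hp2] at hp
  rw [hn1, hn2] at hn
  have hia : i < a := hp
  have hjb : j < b := hn
  have hiI : i ∈ I := by
    rw [hX0eq] at hiX0
    rcases Finset.mem_insert.1 hiX0 with h | h
    · exact absurd h (ne_of_lt (lt_trans hia haj))
    · exact Finset.mem_of_mem_erase h
  have hbI : b ∉ I := by
    intro hbI
    apply hbX0
    rw [hX0eq]
    exact Finset.mem_insert.2 (Or.inr (Finset.mem_erase.2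
      ⟨ne_of_gt (lt_trans haj hjb), hbI⟩))
  have hflip1 := tc_flip cs Q (C := Iᶜ) (a := a) (j := j) (Finset.mem_compl.2 hjI)
    (fun h => (Finset.mem_compl.1 h) haI) haj hc1
  have hcI : tC cs Q Iᶜ i = tC cs Q Iᶜ b := by
    have := hc2
    rw [hX0c, hflip1 i, hflip1 b,
      if_neg (by rintro ⟨h, -⟩; exact absurd h (not_lt.2 (le_of_lt hia))),
      if_neg (by rintro ⟨-, h⟩; exact absurd h (not_le.2 hjb))] at this
    exact this
  set X := insert b (I.erase i) with hXdef
  have e3 : FlipEdge cs Q ρ I X := (edge_iff cs Q ρ hI hiI hbI hib).2 hcI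
  have hXc : Xᶜ = insert i (Iᶜ.erase b) := compl_flip hiI hbI (ne_of_lt hib)
  have hXfacet : IsSCFacet cs Q ρ X := e3.2.1
  have haX : a ∈ X := Finset.mem_insert.2 (Or.inr (Finset.mem_erase.2 ⟨ne_of_gt hia, haI⟩))
  have hjX : j ∉ X := by
    intro hmem
    rcases Finset.mem_insert.1 hmem with h | h
    · exact absurd h (ne_of_lt hjb)
    · exact hjI (Finset.mem_of_mem_erase h)
  have hflip2 := tc_flip cs Q (C := Iᶜ) (a := i) (j := b) (Finset.mem_compl.2 hbI)
    (fun h => (Finset.mem_compl.1 h) hiI) hib hcI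
  have hcond4 : tC cs Q Xᶜ a = tC cs Q Xᶜ j := by
    rw [hXc, hflip2 a, hflip2 j, if_pos ⟨hia, le_of_lt (lt_trans haj hjb)⟩,
      if_pos ⟨lt_trans hia haj, le_of_lt hjb⟩, hc1]
  have e4 : FlipEdge cs Q ρ X (insert j (X.erase a)) :=
    (edge_iff cs Q ρ hXfacet haX hjX haj).2 hcond4
  have hsq : insert j (X.erase a) = X' := by
    rw [hX'eq, hX0eq, hXdef]
    have n1 : i ≠ a := ne_of_lt hia
    have n2 : i ≠ j := ne_of_lt (lt_trans hia haj)
    have n3 : i ≠ b := ne_of_lt hib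
    have n4 : a ≠ j := ne_of_lt haj
    have n5 : a ≠ b := ne_of_lt (lt_trans haj hjb)
    have n6 : j ≠ b := ne_of_lt hjb
    ext x
    simp only [Finset.mem_insert, Finset.mem_erase]
    by_cases e1 : x = i <;> by_cases e2 : x = a <;> by_cases e3 : x = j <;>
      by_cases e4 : x = b <;> subst_eqs <;> tauto
  rw [hsq] at e4
  obtain ⟨hp3, hn3⟩ := lab_flip hiI hbI (ne_of_lt hib)
  obtain ⟨hp4, hn4⟩ := lab_flip haX hjX (ne_of_lt haj)
  rw [hsq] at hp4 hn4
  exact ⟨X, e3, e4, by rw [← hXdef] at hp3; rw [hp3, hp2], by rw [← hXdef] at hn3; rw [hn3, hn2],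
    by rw [hp4, hp1], by rw [hn4, hn1]⟩

/-! ### Walk layer -/

theorem wLabels_cons {α : Type*} (lab : α → α → ℕ) (u x : α) (l : List α) :
    wLabels lab u (x :: l) = lab u x :: wLabels lab x l := rfl

theorem wLabels_length {α : Type*} (lab : α → α → ℕ) (u : α) (l : List α) :
    (wLabels lab u l).length = l.length := by
  induction l generalizing u with
  | nil => rfl
  | cons x l ih => rw [wLabels_cons, List.length_cons, List.length_cons, ih]

theorem wLabels_snoc {α : Type*} (lab : α → α → ℕ) (u v : α) (l : List α) :
    wLabels lab u (l ++ [v]) = wLabels lab u l ++ [lab ((u :: l).getLast (by simp)) v] := by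
  induction l generalizing u with
  | nil => rfl
  | cons y l ih =>
      rw [List.cons_append, wLabels_cons, ih, wLabels_cons]
      rw [List.cons_append]
      congr 1

theorem dwalk_snoc {α : Type*} {E : α → α → Prop} {u v z : α} {l0 : List α}
    (h : DWalk E u v (l0 ++ [z])) :
    z = v ∧ ∃ x, DWalk E u x l0 ∧ E x v ∧ x = (u :: l0).getLast (by simp) := by
  induction l0 generalizing u with
  | nil =>
      cases h with
      | cons he hw =>
          cases hw with
          | nil => exact ⟨rfl, u, DWalk.nil u, he, rfl⟩
  | cons y l ih =>
      cases h with
      | cons he hw =>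
          obtain ⟨rfl, x, hw', he', hx⟩ := ih hw
          refine ⟨rfl, x, DWalk.cons he hw', he', ?_⟩
          rw [hx]
          rw [List.getLast_cons_cons]

section Walks

variable {B W : Type*} [Group W] {M : CoxeterMatrix B} (cs : CoxeterSystem M W)
variable {m : ℕ} (Q : Fin m → B) (ρ : W)

local notation "E" => FlipEdge cs Q ρ

/-- Adjacent positive labels along a walk are distinct. -/
theorem plab_adj_ne {u x y : Finset (Fin m)} (h1 : E u x) (h2 : E x y) :
    pLab u x ≠ pLab x y := by
  obtain ⟨i, j, -, -, -, hiJ, -, -, -, -, -, -, -, -, hp1, -⟩ := edge_dest cs Q ρ h1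
  obtain ⟨i', j', hi', -, -, -, -, -, -, -, -, -, -, -, hp2, -⟩ := edge_dest cs Q ρ h2
  rw [hp1, hp2]
  intro hval
  exact hiJ (Fin.val_injective hval ▸ hi')

theorem nlab_adj_ne {u x y : Finset (Fin m)} (h1 : E u x) (h2 : E x y) :
    nLab u x ≠ nLab x y := by
  obtain ⟨i, j, -, -, hjJ, -, -, -, -, -, -, -, -, -, -, hn1⟩ := edge_dest cs Q ρ h1
  obtain ⟨i', j', -, hj'x, -, -, -, -, -, -, -, -, -, -, -, hn2⟩ := edge_dest cs Q ρ h2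
  rw [hn1, hn2]
  intro hval
  exact hj'x (Fin.val_injective hval ▸ hjJ)

theorem chain_strict {lab : Finset (Fin m) → Finset (Fin m) → ℕ}
    (hne : ∀ u x y : Finset (Fin m), E u x → E x y → lab u x ≠ lab x y)
    {u v : Finset (Fin m)} {l : List (Finset (Fin m))} (hw : DWalk E u v l)
    (hc : (wLabels lab u l).Chain' (· ≥ ·)) : (wLabels lab u l).Chain' (· > ·) := by
  induction l generalizing u with
  | nil => exact List.isChain_nil
  | cons x l ih =>
      cases hw with
      | cons he hw' =>
          rw [wLabels_cons] at hc ⊢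
          cases l with
          | nil => exact List.isChain_singleton _
          | cons y l2 =>
              cases hw' with
              | cons he2 hw2 =>
                  rw [wLabels_cons] at hc ⊢
                  rw [List.Chain', List.isChain_cons_cons] at hc ⊢
                  refine ⟨lt_of_le_of_ne hc.1 (Ne.symm (hne u x y he he2)), ?_⟩
                  have := ih (u := x) (DWalk.cons he2 hw2) (by rw [wLabels_cons]; exact hc.2)
                  rw [wLabels_cons] at this
                  exact this

theorem pairwise_of_walk_chain {lab : Finset (Fin m) → Finset (Fin m) → ℕ}
    (hne : ∀ u x y : Finset (Fin m), E u x → E x y → lab u x ≠ lab x y)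
    {u v : Finset (Fin m)} {l : List (Finset (Fin m))} (hw : DWalk E u v l)
    (hc : (wLabels lab u l).Chain' (· ≥ ·)) : (wLabels lab u l).Pairwise (· > ·) :=
  List.isChain_iff_pairwise.1 (chain_strict cs Q ρ hne hw hc)

theorem list_exists_max {L : List ℕ} (h : L ≠ []) : ∃ b ∈ L, ∀ x ∈ L, x ≤ b := by
  induction L with
  | nil => exact absurd rfl h
  | cons a L ih =>
      cases L with
      | nil => exact ⟨a, List.mem_singleton_self a, by simp⟩
      | cons c L2 =>
          obtain ⟨b, hb, hmax⟩ := ih (by simp)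
          by_cases hab : a ≤ b
          · exact ⟨b, List.mem_cons_of_mem a hb, by
              intro x hx
              rcases List.mem_cons.1 hx with rfl | hx
              · exact hab
              · exact hmax x hx⟩
          · exact ⟨a, List.mem_cons_self, by
              intro x hx
              rcases List.mem_cons.1 hx with rfl | hx
              · exact le_refl x
              · exact le_trans (hmax x hx) (le_of_not_ge hab)⟩

/-- Rotation lemma: from a positive-falling walk one can split off a first flip
realizing the maximal in-label. -/
theorem rot {I J : Finset (Fin m)} {l : List (Finset (Fin m))}
    (hw : DWalk E I J l) (hc : (wLabels pLab I l).Chain' (· ≥ ·)) (hne : l ≠ [])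
    {b : ℕ} (hb : b ∈ wLabels nLab I l) (hbmax : ∀ x ∈ wLabels nLab I l, x ≤ b) :
    ∃ X l', FlipEdge cs Q ρ I X ∧ nLab I X = b ∧ DWalk E X J l' ∧
      (wLabels pLab X l').Chain' (· ≥ ·) ∧
      (wLabels pLab I l : Multiset ℕ) = pLab I X ::ₘ (wLabels pLab X l' : Multiset ℕ) ∧
      (wLabels nLab I l : Multiset ℕ) = b ::ₘ (wLabels nLab X l' : Multiset ℕ) := by
  induction l generalizing I with
  | nil => exact absurd rfl hne
  | cons x l2 ih =>
      cases hw with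
      | cons he hw' =>
          by_cases hcase : nLab I x = b
          · refine ⟨x, l2, he, hcase, hw', ?_, ?_, ?_⟩
            · rw [wLabels_cons] at hc
              exact hc.tail
            · rw [wLabels_cons]; rfl
            · rw [wLabels_cons, ← hcase]; rfl
          · have hl2ne : l2 ≠ [] := by
              rintro rfl
              rw [wLabels_cons] at hb
              simp only [wLabels, List.zipWith_nil_right] at hb
              rcases List.mem_cons.1 hb with h | h
              · exact hcase h.symm
              · exact absurd h (List.not_mem_nil)
            have hbtail : b ∈ wLabels nLab x l2 := by
              rw [wLabels_cons] at hb
              rcases List.mem_cons.1 hb with h | h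
              · exact absurd h.symm hcase
              · exact h
            have hbmaxtail : ∀ y ∈ wLabels nLab x l2, y ≤ b := by
              intro y hy
              exact hbmax y (by rw [wLabels_cons]; exact List.mem_cons_of_mem _ hy)
            have hctail : (wLabels pLab x l2).Chain' (· ≥ ·) := by
              rw [wLabels_cons] at hc; exact hc.tail
            obtain ⟨X2, l3, e2, hnb2, hw3, hc3, hpm, hnm⟩ := ih hw' hctail hl2ne hbtail hbmaxtail
            -- swap the first edge with the (pLab x X2, b) edge
            have hpw := pairwise_of_walk_chain cs Q ρ (lab := pLab)
              (fun _ _ _ h1 h2 => plab_adj_ne cs Q ρ h1 h2) (DWalk.cons he hw') hc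
            have hplt : pLab x X2 < pLab I x := by
              rw [wLabels_cons] at hpw
              have hmem : pLab x X2 ∈ wLabels pLab x l2 := by
                have : pLab x X2 ∈ (wLabels pLab x l2 : Multiset ℕ) := by
                  rw [hpm]; exact Multiset.mem_cons_self _ _
                simpa using this
              exact (List.pairwise_cons.1 hpw).1 _ hmem
            have hnlt : nLab I x < nLab x X2 := by
              rw [hnb2]
              refine lt_of_le_of_ne ?_ hcase
              exact hbmax _ (by rw [wLabels_cons]; exact List.mem_cons_self)
            obtain ⟨X, e3, e4, hpIX, hnIX, hpXX2, hnXX2⟩ :=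
              swap_bwd cs Q ρ he e2 hplt hnlt
            refine ⟨X, X2 :: l3, e3, by rw [hnIX, hnb2], DWalk.cons e4 hw3, ?_, ?_, ?_⟩
            · rw [wLabels_cons]
              rw [List.Chain', List.isChain_cons]
              constructor
              · intro y hy
                have hymem : y ∈ wLabels pLab X2 l3 := List.mem_of_mem_head? hy
                have : y ∈ (wLabels pLab x l2 : Multiset ℕ) := by
                  rw [hpm]
                  exact Multiset.mem_cons_of_mem (by simpa using hymem)
                have hyl : y ∈ wLabels pLab x l2 := by simpa using this
                rw [wLabels_cons] at hpw
                have := (List.pairwise_cons.1 hpw).1 y hyl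
                rw [hpXX2]
                exact le_of_lt this
              · exact hc3
            · rw [wLabels_cons, wLabels_cons, ← Multiset.cons_coe, ← Multiset.cons_coe,
                hpm, hpIX, hpXX2, Multiset.cons_swap]
            · rw [wLabels_cons, wLabels_cons, ← Multiset.cons_coe, ← Multiset.cons_coe,
                hnm, hnXX2, Multiset.cons_swap]

/-- Insertion lemma: a flip whose in-label dominates all in-labels of a subsequent
positive-falling walk can be merged into it. -/
theorem insb {I X J : Finset (Fin m)} {l' : List (Finset (Fin m))} {b : ℕ}
    (he : E I X) (hnb : nLab I X = b) (hw : DWalk E X J l')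
    (hc : (wLabels pLab X l').Chain' (· ≥ ·))
    (hlt : ∀ y ∈ wLabels nLab X l', y < b) :
    ∃ ln, DWalk E I J ln ∧ (wLabels pLab I ln).Chain' (· ≥ ·) ∧
      (wLabels pLab I ln : Multiset ℕ) = pLab I X ::ₘ (wLabels pLab X l' : Multiset ℕ) ∧
      (wLabels nLab I ln : Multiset ℕ) = b ::ₘ (wLabels nLab X l' : Multiset ℕ) := by
  induction l' generalizing I X with
  | nil =>
      cases hw
      refine ⟨[J], DWalk.cons he (DWalk.nil J), List.isChain_singleton _, ?_, ?_⟩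
      · rfl
      · rw [show wLabels nLab I [J] = [nLab I J] from rfl, hnb]; rfl
  | cons X' rest ih =>
      cases hw with
      | cons he2 hw2 =>
          have hpane : pLab I X ≠ pLab X X' := plab_adj_ne cs Q ρ he he2
          have hnlt : nLab X X' < b := hlt _ (by
            rw [wLabels_cons]; exact List.mem_cons_self)
          rcases lt_or_gt_of_ne hpane with hcase | hcase
          · -- pLab I X < pLab X X' : swap needed
            obtain ⟨X2, ea, eb, hp1, hn1, hp2, hn2⟩ := swap_fwd cs Q ρ he he2
              hcase (by rw [hnb]; exact hnlt)
            have hnb2 : nLab X2 X' = b := by rw [hn2, hnb]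
            have hctail : (wLabels pLab X' rest).Chain' (· ≥ ·) := by
              rw [wLabels_cons] at hc; exact hc.tail
            have hlttail : ∀ y ∈ wLabels nLab X' rest, y < b := by
              intro y hy
              exact hlt y (by rw [wLabels_cons]; exact List.mem_cons_of_mem _ hy)
            obtain ⟨w, hww, hwc, hwp, hwn⟩ := ih eb hnb2 hw2 hctail hlttail
            have hpw := pairwise_of_walk_chain cs Q ρ (lab := pLab)
              (fun _ _ _ h1 h2 => plab_adj_ne cs Q ρ h1 h2) (DWalk.cons he2 hw2) hc
            refine ⟨X2 :: w, DWalk.cons ea hww, ?_, ?_, ?_⟩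
            · rw [wLabels_cons, List.Chain', List.isChain_cons]
              refine ⟨?_, hwc⟩
              intro y hy
              have hymem : y ∈ wLabels pLab X2 w := List.mem_of_mem_head? hy
              have : y ∈ (wLabels pLab X2 w : Multiset ℕ) := by simpa using hymem
              rw [hwp] at this
              rcases Multiset.mem_cons.1 this with rfl | hmem
              · rw [hp1, hp2]
                exact le_of_lt hcase
              · have hyl : y ∈ wLabels pLab X' rest := by simpa using hmem
                rw [wLabels_cons] at hpw
                have := (List.pairwise_cons.1 hpw).1 y hyl
                rw [hp1]
                exact le_of_lt this
            · rw [wLabels_cons, ← Multiset.cons_coe, hwp, wLabels_cons, ← Multiset.cons_coe,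
                hp1, hp2, Multiset.cons_swap]
            · rw [wLabels_cons, ← Multiset.cons_coe, hwn, wLabels_cons, ← Multiset.cons_coe,
                hn1, Multiset.cons_swap]
          · -- pLab X X' < pLab I X : compose directly
            refine ⟨X :: X' :: rest, DWalk.cons he (DWalk.cons he2 hw2), ?_, ?_, ?_⟩
            · rw [wLabels_cons, List.Chain', List.isChain_cons]
              refine ⟨?_, hc⟩
              intro y hy
              rw [wLabels_cons] at hy
              simp only [List.head?_cons, Option.mem_def, Option.some.injEq] at hy
              rw [← hy]
              exact le_of_lt hcase
            · rw [wLabels_cons, ← Multiset.cons_coe]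
            · rw [wLabels_cons, ← Multiset.cons_coe, hnb]

theorem labels_list_eq {l1 l2 : List ℕ} (h1 : l1.Chain' (· ≥ ·)) (h2 : l2.Chain' (· ≥ ·))
    (hm : (l1 : Multiset ℕ) = (l2 : Multiset ℕ)) : l1 = l2 := by
  haveI : Std.Antisymm (· ≥ · : ℕ → ℕ → Prop) := ⟨fun a b ha hb => le_antisymm hb ha⟩
  exact List.Perm.eq_of_pairwise'
    (List.isChain_iff_pairwise.1 h1) (List.isChain_iff_pairwise.1 h2) (Multiset.coe_eq_coe.1 hm)

/-- Uniqueness of positive-falling walks with a given out-multiset. -/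
theorem upos {I v1 v2 : Finset (Fin m)} {l1 l2 : List (Finset (Fin m))}
    (h1 : DWalk E I v1 l1) (h2 : DWalk E I v2 l2)
    (hc1 : (wLabels pLab I l1).Chain' (· ≥ ·)) (hc2 : (wLabels pLab I l2).Chain' (· ≥ ·))
    (hm : (wLabels pLab I l1 : Multiset ℕ) = (wLabels pLab I l2 : Multiset ℕ)) :
    l1 = l2 := by
  have hll : wLabels pLab I l1 = wLabels pLab I l2 := labels_list_eq hc1 hc2 hm
  clear hm hc2
  induction l1 generalizing I l2 with
  | nil =>
      have : l2.length = 0 := by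
        rw [← wLabels_length pLab I l2, ← hll]
        rfl
      exact (List.eq_nil_of_length_eq_zero this).symm
  | cons x t1 ih =>
      cases l2 with
      | nil =>
          exfalso
          have : (x :: t1).length = 0 := by
            rw [← wLabels_length pLab I (x :: t1), hll]
            rfl
          simp at this
      | cons y t2 =>
          cases h1 with
          | cons he1 hw1 =>
          cases h2 with
          | cons he2 hw2 =>
          rw [wLabels_cons, wLabels_cons] at hll
          have hhead : pLab I x = pLab I y := by
            exact (List.cons.injEq _ _ _ _ ▸ hll).1
          obtain ⟨rfl, -⟩ := out_unique cs Q ρ he1 he2 hhead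
          have htail : wLabels pLab x t1 = wLabels pLab x t2 := by
            exact (List.cons.injEq _ _ _ _ ▸ hll).2
          rw [ih hw1 hw2 (by rw [wLabels_cons] at hc1; exact hc1.tail) htail]

/-- Uniqueness of negative-falling walks between fixed endpoints with a given
in-multiset. -/
theorem uneg {I J : Finset (Fin m)} {l1 l2 : List (Finset (Fin m))}
    (h1 : DWalk E I J l1) (h2 : DWalk E I J l2)
    (hc1 : (wLabels nLab I l1).Chain' (· ≥ ·)) (hc2 : (wLabels nLab I l2).Chain' (· ≥ ·))
    (hm : (wLabels nLab I l1 : Multiset ℕ) = (wLabels nLab I l2 : Multiset ℕ)) :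
    l1 = l2 := by
  have hll : wLabels nLab I l1 = wLabels nLab I l2 := labels_list_eq hc1 hc2 hm
  have main : ∀ n : ℕ, ∀ (I J : Finset (Fin m)) (l1 l2 : List (Finset (Fin m))),
      l1.length = n → DWalk E I J l1 → DWalk E I J l2 →
      wLabels nLab I l1 = wLabels nLab I l2 → l1 = l2 := by
    intro n
    induction n with
    | zero =>
        intro I J l1 l2 hn h1 h2 hll
        have h10 : l1 = [] := List.eq_nil_of_length_eq_zero hn
        subst h10
        have : l2.length = 0 := by
          rw [← wLabels_length nLab I l2, ← hll]; rfl
        exact (List.eq_nil_of_length_eq_zero this).symm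
    | succ n ih =>
        intro I J l1 l2 hn h1 h2 hll
        rcases List.eq_nil_or_concat l1 with rfl | ⟨l01, z1, rfl⟩
        · simp at hn
        simp only [List.concat_eq_append] at hn h1 hll ⊢
        rcases List.eq_nil_or_concat l2 with rfl | ⟨l02, z2, rfl⟩
        · exfalso
          have h0 : wLabels nLab I (l01 ++ [z1]) = [] := by rw [hll]; rfl
          have := wLabels_length nLab I (l01 ++ [z1])
          rw [h0] at this
          simp at this
        simp only [List.concat_eq_append] at h2 hll ⊢
        obtain ⟨hz1, x1, hw1, he1, hx1⟩ := dwalk_snoc h1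
        obtain ⟨hz2, x2, hw2, he2, hx2⟩ := dwalk_snoc h2
        subst hz1
        subst hz2
        rw [wLabels_snoc, wLabels_snoc] at hll
        have hlen : (wLabels nLab I l01).length = (wLabels nLab I l02).length := by
          rw [wLabels_length, wLabels_length]
          have := congrArg List.length hll
          simp only [List.length_append, List.length_singleton,
            wLabels_length] at this
          omega
        obtain ⟨hinit, hlast⟩ := List.append_inj hll hlen
        have hlab := hlast
        rw [List.cons.injEq] at hlab
        replace hlab := hlab.1
        rw [← hx1, ← hx2] at hlab
        obtain ⟨rfl, -⟩ := in_unique cs Q ρ he1 he2 hlab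
        have hrec : l01 = l02 := by
          apply ih I x1 l01 l02 ?_ hw1 hw2 hinit
          simp only [List.length_append, List.length_singleton] at hn
          omega
        rw [hrec]
  exact main l1.length I J l1 l2 rfl h1 h2 hll

/-- Positive-falling implies negative-falling, multiset-refined. -/
theorem ptn : ∀ n (A Bm : Multiset ℕ) (I J : Finset (Fin m)), Bm.card = n →
    (∃ l, DWalk E I J l ∧ (wLabels pLab I l).Chain' (· ≥ ·) ∧
      (wLabels pLab I l : Multiset ℕ) = A ∧ (wLabels nLab I l : Multiset ℕ) = Bm) →
    (∃ l, DWalk E I J l ∧ (wLabels nLab I l).Chain' (· ≥ ·) ∧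
      (wLabels pLab I l : Multiset ℕ) = A ∧ (wLabels nLab I l : Multiset ℕ) = Bm) := by
  intro n
  induction n with
  | zero =>
      rintro A Bm I J hcard ⟨l, hw, hc, hA, hB⟩
      have hBm : Bm = 0 := Multiset.card_eq_zero.1 hcard
      subst hBm
      have hl : l = [] := by
        have h0 : wLabels nLab I l = [] := by
          rw [← Multiset.coe_eq_zero]; exact hB
        have := wLabels_length nLab I l
        rw [h0] at this
        exact List.eq_nil_of_length_eq_zero this.symm
      subst hl
      exact ⟨[], hw, List.isChain_nil, hA, hB⟩
  | succ n ih =>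
      rintro A Bm I J hcard ⟨l, hw, hc, hA, hB⟩
      have hlne : l ≠ [] := by
        rintro rfl
        rw [← hB] at hcard
        simp [wLabels] at hcard
      have hnlne : wLabels nLab I l ≠ [] := by
        intro h0
        apply hlne
        have := wLabels_length nLab I l
        rw [h0] at this
        exact List.eq_nil_of_length_eq_zero this.symm
      obtain ⟨b, hbmem, hbmax⟩ := list_exists_max hnlne
      obtain ⟨X, l', e, hnIX, hw', hc', hpm, hnm⟩ := rot cs Q ρ hw hc hlne hbmem hbmax
      have hcard' : (wLabels nLab X l' : Multiset ℕ).card = n := by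
        have : Bm.card = n + 1 := hcard
        rw [← hB, hnm] at this
        simpa using this
      obtain ⟨l2, hw2, hc2, hA2, hB2⟩ := ih _ _ X J hcard'
        ⟨l', hw', hc', rfl, rfl⟩
      refine ⟨X :: l2, DWalk.cons e hw2, ?_, ?_, ?_⟩
      · rw [wLabels_cons, List.Chain', List.isChain_cons]
        refine ⟨?_, hc2⟩
        intro y hy
        have hymem : y ∈ wLabels nLab X l2 := List.mem_of_mem_head? hy
        have : y ∈ (wLabels nLab X l2 : Multiset ℕ) := by simpa using hymem
        rw [hB2] at this
        have hyl : y ∈ wLabels nLab X l' := by simpa using this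
        have : y ∈ (wLabels nLab I l : Multiset ℕ) := by
          rw [hnm]; exact Multiset.mem_cons_of_mem (by simpa using hyl)
        rw [hnIX]
        exact hbmax y (by simpa using this)
      · rw [wLabels_cons, ← Multiset.cons_coe, hA2, ← hpm, hA]
      · rw [wLabels_cons, ← Multiset.cons_coe, hB2, hnIX, ← hnm, hB]

/-- Negative-falling implies positive-falling, multiset-refined. -/
theorem ntp : ∀ n (A Bm : Multiset ℕ) (I J : Finset (Fin m)), Bm.card = n →
    (∃ l, DWalk E I J l ∧ (wLabels nLab I l).Chain' (· ≥ ·) ∧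
      (wLabels pLab I l : Multiset ℕ) = A ∧ (wLabels nLab I l : Multiset ℕ) = Bm) →
    (∃ l, DWalk E I J l ∧ (wLabels pLab I l).Chain' (· ≥ ·) ∧
      (wLabels pLab I l : Multiset ℕ) = A ∧ (wLabels nLab I l : Multiset ℕ) = Bm) := by
  intro n
  induction n with
  | zero =>
      rintro A Bm I J hcard ⟨l, hw, hc, hA, hB⟩
      have hBm : Bm = 0 := Multiset.card_eq_zero.1 hcard
      subst hBm
      have hl : l = [] := by
        have h0 : wLabels nLab I l = [] := by
          rw [← Multiset.coe_eq_zero]; exact hB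
        have := wLabels_length nLab I l
        rw [h0] at this
        exact List.eq_nil_of_length_eq_zero this.symm
      subst hl
      exact ⟨[], hw, List.isChain_nil, hA, hB⟩
  | succ n ih =>
      rintro A Bm I J hcard ⟨l, hw, hc, hA, hB⟩
      cases l with
      | nil =>
          exfalso
          rw [← hB] at hcard
          simp [wLabels] at hcard
      | cons X l2 =>
          cases hw with
          | cons he hw2 =>
          have hcard' : (wLabels nLab X l2 : Multiset ℕ).card = n := by
            have : Bm.card = n + 1 := hcard
            rw [← hB, wLabels_cons, ← Multiset.cons_coe] at this
            simpa using this
          have hctail : (wLabels nLab X l2).Chain' (· ≥ ·) := by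
            rw [wLabels_cons] at hc; exact hc.tail
          obtain ⟨l', hw', hc', hA', hB'⟩ := ih _ _ X J hcard'
            ⟨l2, hw2, hctail, rfl, rfl⟩
          have hnpw := pairwise_of_walk_chain cs Q ρ (lab := nLab)
            (fun _ _ _ h1 h2 => nlab_adj_ne cs Q ρ h1 h2) (DWalk.cons he hw2) hc
          have hlt : ∀ y ∈ wLabels nLab X l', y < nLab I X := by
            intro y hy
            have : y ∈ (wLabels nLab X l' : Multiset ℕ) := by simpa using hy
            rw [hB'] at this
            have hyl : y ∈ wLabels nLab X l2 := by simpa using this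
            rw [wLabels_cons] at hnpw
            exact (List.pairwise_cons.1 hnpw).1 y hyl
          obtain ⟨ln, hwn, hcn, hpmn, hnmn⟩ := insb cs Q ρ he rfl hw' hc' hlt
          refine ⟨ln, hwn, hcn, ?_, ?_⟩
          · rw [hpmn, hA', ← hA, wLabels_cons, ← Multiset.cons_coe]
          · rw [hnmn, hB', ← hB, wLabels_cons, ← Multiset.cons_coe]

end Walks

end Core

end FallingAux

open FallingAux in
/-- For any two facets `I`, `J` and multisets `A`, `B` of positions: there is a
positive-falling path from `I` to `J` flipping out `A` and flipping in `B` if and only if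
there is a negative-falling path with the same property.  In particular positive-falling
and negative-falling paths from `I` to `J` are equinumerous. -/
theorem falling_paths_bijection {B W : Type*} [Group W] [Finite W]
    {M : CoxeterMatrix B} (cs : CoxeterSystem M W)
    {m : ℕ} (Q : Fin m → B) (ρ : W) (I J : Finset (Fin m))
    (hI : IsSCFacet cs Q ρ I) (hJ : IsSCFacet cs Q ρ J) :
    (∀ A B' : Multiset ℕ,
      (∃ l : List (Finset (Fin m)), DWalk (FlipEdge cs Q ρ) I J l ∧
        List.Chain' (· ≥ ·) (wLabels pLab I l) ∧
        (wLabels pLab I l : Multiset ℕ) = A ∧ (wLabels nLab I l : Multiset ℕ) = B') ↔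
      (∃ l : List (Finset (Fin m)), DWalk (FlipEdge cs Q ρ) I J l ∧
        List.Chain' (· ≥ ·) (wLabels nLab I l) ∧
        (wLabels pLab I l : Multiset ℕ) = A ∧ (wLabels nLab I l : Multiset ℕ) = B')) ∧
    {l : List (Finset (Fin m)) | DWalk (FlipEdge cs Q ρ) I J l ∧
        List.Chain' (· ≥ ·) (wLabels pLab I l)}.ncard =
      {l : List (Finset (Fin m)) | DWalk (FlipEdge cs Q ρ) I J l ∧
        List.Chain' (· ≥ ·) (wLabels nLab I l)}.ncard := by
  constructor
  · intro A B'
    constructor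
    · intro h
      obtain ⟨l, hw, hc, hA, hB⟩ := h
      exact ptn cs Q ρ B'.card A B' I J (by rw [← hB]) ⟨l, hw, hc, hA, hB⟩
    · intro h
      obtain ⟨l, hw, hc, hA, hB⟩ := h
      exact ntp cs Q ρ B'.card A B' I J (by rw [← hB]) ⟨l, hw, hc, hA, hB⟩
  · have h12 : ∀ l : List (Finset (Fin m)),
        (DWalk (FlipEdge cs Q ρ) I J l ∧ List.Chain' (· ≥ ·) (wLabels pLab I l)) →
        ∃ l', (DWalk (FlipEdge cs Q ρ) I J l' ∧
            List.Chain' (· ≥ ·) (wLabels nLab I l')) ∧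
          (wLabels pLab I l' : Multiset ℕ) = (wLabels pLab I l : Multiset ℕ) ∧
          (wLabels nLab I l' : Multiset ℕ) = (wLabels nLab I l : Multiset ℕ) := by
      intro l hl
      obtain ⟨l', hw', hc', hA', hB'⟩ := ptn cs Q ρ (wLabels nLab I l : Multiset ℕ).card
        (wLabels pLab I l) (wLabels nLab I l) I J rfl ⟨l, hl.1, hl.2, rfl, rfl⟩
      exact ⟨l', ⟨hw', hc'⟩, hA', hB'⟩
    have h21 : ∀ l : List (Finset (Fin m)),
        (DWalk (FlipEdge cs Q ρ) I J l ∧ List.Chain' (· ≥ ·) (wLabels nLab I l)) →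
        ∃ l', (DWalk (FlipEdge cs Q ρ) I J l' ∧
            List.Chain' (· ≥ ·) (wLabels pLab I l')) ∧
          (wLabels pLab I l' : Multiset ℕ) = (wLabels pLab I l : Multiset ℕ) ∧
          (wLabels nLab I l' : Multiset ℕ) = (wLabels nLab I l : Multiset ℕ) := by
      intro l hl
      obtain ⟨l', hw', hc', hA', hB'⟩ := ntp cs Q ρ (wLabels nLab I l : Multiset ℕ).card
        (wLabels pLab I l) (wLabels nLab I l) I J rfl ⟨l, hl.1, hl.2, rfl, rfl⟩
      exact ⟨l', ⟨hw', hc'⟩, hA', hB'⟩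
    choose f hf1 hf2 hf3 using h12
    choose g hg1 hg2 hg3 using h21
    have e : {l : List (Finset (Fin m)) // DWalk (FlipEdge cs Q ρ) I J l ∧
          List.Chain' (· ≥ ·) (wLabels pLab I l)} ≃
        {l : List (Finset (Fin m)) // DWalk (FlipEdge cs Q ρ) I J l ∧
          List.Chain' (· ≥ ·) (wLabels nLab I l)} := by
      refine ⟨fun x => ⟨f x.1 x.2, hf1 x.1 x.2⟩, fun y => ⟨g y.1 y.2, hg1 y.1 y.2⟩, ?_, ?_⟩
      · intro x
        apply Subtype.ext
        show g (f x.1 x.2) (hf1 x.1 x.2) = x.1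
        apply upos cs Q ρ (hg1 _ _).1 x.2.1 (hg1 _ _).2 x.2.2
        rw [hg2, hf2]
      · intro y
        apply Subtype.ext
        show f (g y.1 y.2) (hg1 y.1 y.2) = y.1
        apply uneg cs Q ρ (hf1 _ _).1 y.2.1 (hf1 _ _).2 y.2.2
        rw [hf3, hg3]
    rw [← Nat.card_coe_set_eq, ← Nat.card_coe_set_eq]
    exact Nat.card_congr e
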